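/- Let (T(t))_{t≥0} be a C₀-semigroup on a complex Banach space X with infinitesimal generator A. Suppose A has the SVEP and T(t) is local mean ergodic at x ∈ X. If 0 is a pole of the local resolvent function x̂_A of A at x of order n, then n ≤ 1. -/

import Mathlib

open Filter Topology Metric MeasureTheory Set

/-- A strongly continuous one-parameter semigroup of bounded linear operators:
`T 0 = I`, `T (s+t) = T s ∘ T t` for `s,t ≥ 0`, and `t ↦ T t x` is continuous
on `[0,∞)` for every `x`. -/
structure IsC0Semigroup {X : Type*} [NormedAddCommGroup X] [NormedSpace ℂ X]
    (T : ℝ → X →L[ℂ] X) : Prop where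
  map_zero : T 0 = 1
  map_add : ∀ s t : ℝ, 0 ≤ s → 0 ≤ t → T (s + t) = T s ∘L T t
  strong_continuity : ∀ x : X, ContinuousOn (fun t : ℝ => T t x) (Set.Ici 0)

/-- `A`, with domain `D`, is the infinitesimal generator of the semigroup `T`:
`D = {x : lim_{t→0⁺} (T t x - x)/t exists}` and `A x` is that limit on `D`. -/
structure IsGenerator {X : Type*} [NormedAddCommGroup X] [NormedSpace ℂ X]
    (T : ℝ → X →L[ℂ] X) (D : Set X) (A : X → X) : Prop where
  mem_domain_iff : ∀ x : X,
    x ∈ D ↔ ∃ y : X, Tendsto (fun t : ℝ => t⁻¹ • (T t x - x)) (𝓝[>] 0) (𝓝 y)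
  tendsto_of_mem : ∀ x ∈ D,
    Tendsto (fun t : ℝ => t⁻¹ • (T t x - x)) (𝓝[>] 0) (𝓝 (A x))

/-- The Cesàro average `C(t)x = t⁻¹ ∫₀ᵗ T(s)x ds`. -/
noncomputable def cesaro {X : Type*} [NormedAddCommGroup X] [NormedSpace ℂ X]
    (T : ℝ → X →L[ℂ] X) (t : ℝ) (x : X) : X :=
  t⁻¹ • ∫ s in (0:ℝ)..t, T s x

/-- The local resolvent set of the (possibly unbounded) operator `A` with domain `D`
at `x`: the union of all open `U ⊆ ℂ` admitting an analytic `f : U → D` with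
`(A - μ)f(μ) = x` on `U`. -/
def localResolventSet {X : Type*} [NormedAddCommGroup X] [NormedSpace ℂ X]
    (D : Set X) (A : X → X) (x : X) : Set ℂ :=
  {μ | ∃ U : Set ℂ, IsOpen U ∧ μ ∈ U ∧ ∃ f : ℂ → X, AnalyticOnNhd ℂ f U ∧
      ∀ z ∈ U, f z ∈ D ∧ A (f z) - z • f z = x}

/-- The local spectrum `σ_A(x) = ℂ \ ρ_A(x)`. -/
def localSpectrum {X : Type*} [NormedAddCommGroup X] [NormedSpace ℂ X]
    (D : Set X) (A : X → X) (x : X) : Set ℂ :=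
  (localResolventSet D A x)ᶜ

/-- `A` (with domain `D`) has the single valued extension property at `μ₀`:
on every open disk centred at `μ₀`, the only analytic `f` with values in `D`
satisfying `(z - A) f z = 0` is `f ≡ 0`. -/
def HasSVEPAt {X : Type*} [NormedAddCommGroup X] [NormedSpace ℂ X]
    (D : Set X) (A : X → X) (μ₀ : ℂ) : Prop :=
  ∀ r : ℝ, 0 < r → ∀ f : ℂ → X, AnalyticOnNhd ℂ f (ball μ₀ r) →
    (∀ z ∈ ball μ₀ r, f z ∈ D ∧ z • f z - A (f z) = 0) →
    ∀ z ∈ ball μ₀ r, f z = 0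

/-- `α` is a pole of order `n` of the local resolvent function of `A` (with domain `D`)
at `x`: `α` is an isolated point of the local spectrum `σ_A(x)` and there is an
analytic function `f` near `α`, nonvanishing at `α`, such that
`(z-α)⁻ⁿ • f z` is the local resolvent function on a punctured disk around `α`
(i.e. it takes values in `D` and solves `(z - A) u = x` there). -/
def IsLocalPoleOfOrder {X : Type*} [NormedAddCommGroup X] [NormedSpace ℂ X]
    (D : Set X) (A : X → X) (x : X) (α : ℂ) (n : ℕ) : Prop :=
  α ∉ localResolventSet D A x ∧
  ∃ r : ℝ, 0 < r ∧
    (∀ z : ℂ, z ≠ α → ‖z - α‖ < r → z ∈ localResolventSet D A x) ∧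
    ∃ f : ℂ → X, AnalyticOnNhd ℂ f (ball α r) ∧ f α ≠ 0 ∧
      ∀ z ∈ ball α r, z ≠ α →
        ((z - α)⁻¹ ^ n • f z ∈ D ∧
          z • ((z - α)⁻¹ ^ n • f z) - A ((z - α)⁻¹ ^ n • f z) = x)

section Helpers

variable {X : Type*} [NormedAddCommGroup X] [NormedSpace ℂ X]
variable {T : ℝ → X →L[ℂ] X} {D : Set X} {A : X → X}

lemma gen_sub (hA : IsGenerator T D A) {u v : X} (hu : u ∈ D) (hv : v ∈ D) :
    u - v ∈ D ∧ A (u - v) = A u - A v := by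
  have h3 : Tendsto (fun t : ℝ => t⁻¹ • (T t (u - v) - (u - v))) (𝓝[>] 0)
      (𝓝 (A u - A v)) := by
    refine ((hA.tendsto_of_mem u hu).sub (hA.tendsto_of_mem v hv)).congr (fun t => ?_)
    rw [map_sub, ← smul_sub]
    congr 1
    abel
  have hm : u - v ∈ D := (hA.mem_domain_iff _).2 ⟨_, h3⟩
  exact ⟨hm, tendsto_nhds_unique (hA.tendsto_of_mem _ hm) h3⟩

lemma gen_smul (hA : IsGenerator T D A) {u : X} (hu : u ∈ D) (c : ℂ) :
    c • u ∈ D ∧ A (c • u) = c • A u := by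
  have h3 : Tendsto (fun t : ℝ => t⁻¹ • (T t (c • u) - c • u)) (𝓝[>] 0)
      (𝓝 (c • A u)) := by
    refine ((hA.tendsto_of_mem u hu).const_smul c).congr (fun t => ?_)
    rw [_root_.map_smul, ← smul_sub, smul_comm]
  have hm : c • u ∈ D := (hA.mem_domain_iff _).2 ⟨_, h3⟩
  exact ⟨hm, tendsto_nhds_unique (hA.tendsto_of_mem _ hm) h3⟩

variable (T) in
noncomputable def Fprim (x : X) : ℝ → X := fun s => ∫ u in (0:ℝ)..s, T u x

lemma orbit_intervalIntegrable (hT : IsC0Semigroup T) (x : X) {a b : ℝ}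
    (ha : 0 ≤ a) (hb : 0 ≤ b) :
    IntervalIntegrable (fun s : ℝ => T s x) volume a b :=
  ((hT.strong_continuity x).mono (fun s hs => by
    rcases hs with ⟨h1, _⟩
    exact le_trans (le_min ha hb) h1)).intervalIntegrable

end Helpers

section Helpers2

variable {X : Type*} [NormedAddCommGroup X] [NormedSpace ℂ X] [CompleteSpace X]
variable {T : ℝ → X →L[ℂ] X} {D : Set X} {A : X → X}

omit [CompleteSpace X] in
lemma Fprim_continuousOn (hT : IsC0Semigroup T) (x : X) :
    ContinuousOn (Fprim T x) (Set.Ici 0) := by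
  intro s₀ hs₀
  have hint : IntervalIntegrable (fun s : ℝ => T s x) volume 0 (s₀ + 1) :=
    orbit_intervalIntegrable hT x le_rfl (by linarith [hs₀.out])
  have h1 : ContinuousOn (Fprim T x) (Set.uIcc 0 (s₀ + 1)) :=
    intervalIntegral.continuousOn_primitive_interval' hint Set.left_mem_uIcc
  have h2 : ContinuousWithinAt (Fprim T x) (Set.Icc 0 (s₀ + 1)) s₀ := by
    have : Set.uIcc 0 (s₀+1) = Set.Icc 0 (s₀+1) := Set.uIcc_of_le (by linarith [hs₀.out])
    rw [this] at h1
    exact h1 s₀ ⟨hs₀.out, by linarith⟩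
  refine h2.mono_of_mem_nhdsWithin ?_
  rw [show Set.Icc (0:ℝ) (s₀+1) = Set.Ici 0 ∩ Set.Iic (s₀+1) from (Set.Ici_inter_Iic).symm]
  exact Filter.inter_mem self_mem_nhdsWithin
    (nhdsWithin_le_nhds (Iic_mem_nhds (by linarith)))

omit [CompleteSpace X] in
lemma Fprim_zero (x : X) : Fprim T x 0 = 0 := by simp [Fprim]

/-- `T h (F s) = F (s + h) - F h` for `h, s ≥ 0`. -/
lemma T_Fprim (hT : IsC0Semigroup T) (x : X) {h s : ℝ} (hh : 0 ≤ h) (hs : 0 ≤ s) :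
    T h (Fprim T x s) = Fprim T x (s + h) - Fprim T x h := by
  have key : T h (Fprim T x s) = ∫ u in (0:ℝ)..s, T h (T u x) := by
    exact (ContinuousLinearMap.intervalIntegral_comp_comm (T h)
      (orbit_intervalIntegrable hT x le_rfl hs)).symm
  rw [key]
  have congr1 : ∫ u in (0:ℝ)..s, T h (T u x) = ∫ u in (0:ℝ)..s, T (h + u) x := by
    refine intervalIntegral.integral_congr (fun u hu => ?_)
    have hu' : 0 ≤ u := by
      rcases hu with ⟨h1, _⟩
      simpa [min_eq_left hs] using h1  -- uIcc 0 s = Icc 0 s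
    rw [hT.map_add h u hh hu']
    rfl
  rw [congr1]
  have congr2 : ∫ u in (0:ℝ)..s, T (h + u) x = ∫ v in h..(h + s), T v x := by
    simpa using intervalIntegral.integral_comp_add_left (a := (0:ℝ)) (b := s) (fun v => T v x) h
  rw [congr2]
  have : Fprim T x (s + h) - Fprim T x h = ∫ v in h..(s + h), T v x :=
    intervalIntegral.integral_interval_sub_left
      (orbit_intervalIntegrable hT x le_rfl (by linarith))
      (orbit_intervalIntegrable hT x le_rfl hh)
  rw [this, add_comm h s]

/-- `h⁻¹ • F h → x` as `h → 0⁺`. -/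
lemma Fprim_deriv_zero (hT : IsC0Semigroup T) (x : X) :
    Tendsto (fun h : ℝ => h⁻¹ • Fprim T x h) (𝓝[>] 0) (𝓝 x) := by
  rw [Metric.tendsto_nhdsWithin_nhds]
  intro ε hε
  have hcont : ContinuousWithinAt (fun s : ℝ => T s x) (Set.Ici 0) 0 :=
    hT.strong_continuity x 0 Set.self_mem_Ici
  rw [Metric.continuousWithinAt_iff] at hcont
  obtain ⟨δ, hδ, hδ'⟩ := hcont (ε/2) (by linarith)
  refine ⟨δ, hδ, fun {h} hh hdist => ?_⟩
  have hh' : 0 < h := hh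
  have hhδ : h < δ := by
    rw [Real.dist_eq, sub_zero, abs_of_pos hh'] at hdist; exact hdist
  have heq : Fprim T x h - h • x = ∫ u in (0:ℝ)..h, (T u x - x) := by
    rw [intervalIntegral.integral_sub (orbit_intervalIntegrable hT x le_rfl hh'.le)
      (intervalIntegrable_const), intervalIntegral.integral_const]
    simp [Fprim]
  have hbound : ‖Fprim T x h - h • x‖ ≤ ε/2 * |h - 0| := by
    rw [heq]
    refine intervalIntegral.norm_integral_le_of_norm_le_const (fun u hu => ?_)
    rw [Set.uIoc_of_le hh'.le] at hu
    have : dist (T u x) (T 0 x) < ε/2 := by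
      refine hδ' hu.1.le ?_
      rw [Real.dist_eq, sub_zero, abs_of_nonneg hu.1.le]; exact lt_of_le_of_lt hu.2 hhδ
    have h0 : T 0 x = x := by rw [hT.map_zero]; rfl
    rw [dist_eq_norm, h0] at this
    exact this.le
  have : dist (h⁻¹ • Fprim T x h) x ≤ ε/2 := by
    rw [dist_eq_norm]
    have : h⁻¹ • Fprim T x h - x = h⁻¹ • (Fprim T x h - h • x) := by
      rw [smul_sub, smul_smul, inv_mul_cancel₀ hh'.ne', one_smul]
    rw [this, norm_smul, norm_inv, Real.norm_eq_abs, abs_of_pos hh']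
    calc h⁻¹ * ‖Fprim T x h - h • x‖ ≤ h⁻¹ * (ε/2 * |h - 0|) := by
          exact mul_le_mul_of_nonneg_left hbound (by positivity)
      _ = ε/2 := by
          rw [sub_zero, abs_of_pos hh']; field_simp
  linarith [this]

end Helpers2

section Helpers3

lemma one_add_le_exp_aux {t : ℝ} (ht : 0 < t) {s : ℝ} (hs : 0 ≤ s) :
    1 + s ≤ max 1 t⁻¹ * Real.exp (t * s) := by
  have h1 : (1:ℝ) ≤ max 1 t⁻¹ := le_max_left _ _
  have h2 : t⁻¹ ≤ max 1 t⁻¹ := le_max_right _ _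
  have h3 : 1 + t * s ≤ Real.exp (t * s) := by
    have := Real.add_one_le_exp (t * s); linarith
  have h4 : 1 + s ≤ max 1 t⁻¹ * (1 + t * s) := by
    have ht' : t⁻¹ * t = 1 := inv_mul_cancel₀ ht.ne'
    nlinarith [mul_nonneg (mul_nonneg (sub_nonneg.2 h2) ht.le) hs]
  calc 1 + s ≤ max 1 t⁻¹ * (1 + t * s) := h4
    _ ≤ max 1 t⁻¹ * Real.exp (t * s) := by
        exact mul_le_mul_of_nonneg_left h3 (by positivity)

lemma integral_exp_neg_mul_Ioi_aux {b : ℝ} (hb : 0 < b) :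
    ∫ s in Set.Ioi (0:ℝ), Real.exp (-b * s) = b⁻¹ := by
  have hderiv : ∀ s ∈ Set.Ici (0:ℝ),
      HasDerivAt (fun s : ℝ => -b⁻¹ * Real.exp (-b * s)) (Real.exp (-b * s)) s := by
    intro s _
    have h1 : HasDerivAt (fun s : ℝ => -b * s) (-b) s := by
      simpa using (hasDerivAt_id s).const_mul (-b)
    have h2 := h1.exp
    have h3 := h2.const_mul (-b⁻¹)
    have hb0 : b ≠ 0 := hb.ne'
    exact h3.congr_deriv (by field_simp)
  have hint : MeasureTheory.IntegrableOn (fun s : ℝ => Real.exp (-b * s)) (Set.Ioi 0) :=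
    exp_neg_integrableOn_Ioi 0 hb
  have htend : Tendsto (fun s : ℝ => -b⁻¹ * Real.exp (-b * s)) atTop (𝓝 0) := by
    have h1 : Tendsto (fun s : ℝ => b * s) atTop atTop :=
      Tendsto.const_mul_atTop hb tendsto_id
    have h2 : Tendsto (fun s : ℝ => Real.exp (-(b * s))) atTop (𝓝 0) :=
      Real.tendsto_exp_neg_atTop_nhds_zero.comp h1
    have h3 := h2.const_mul (-b⁻¹)
    simpa [neg_mul] using h3
  have := MeasureTheory.integral_Ioi_of_hasDerivAt_of_tendsto' hderiv hint htend
  rw [this]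
  simp

lemma cexp_norm_aux' (l : ℂ) (s : ℝ) :
    ‖Complex.exp (-(l * s))‖ = Real.exp (-l.re * s) := by
  rw [Complex.norm_exp]
  congr 1
  simp [Complex.mul_re]

lemma cexp_integrableOn_aux {l : ℂ} (hl : 0 < l.re) :
    MeasureTheory.IntegrableOn (fun s : ℝ => Complex.exp (-(l * s))) (Set.Ioi 0) := by
  refine MeasureTheory.Integrable.mono' (exp_neg_integrableOn_Ioi 0 hl) ?_ ?_
  · refine (Continuous.aestronglyMeasurable ?_).restrict
    exact Complex.continuous_exp.comp (by continuity)
  · filter_upwards with s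
    rw [cexp_norm_aux' l s]

lemma integral_cexp_neg_mul_Ioi_aux {l : ℂ} (hl : 0 < l.re) :
    ∫ s in Set.Ioi (0:ℝ), Complex.exp (-(l * s)) = l⁻¹ := by
  have hnorm : ∀ s : ℝ, ‖Complex.exp (-(l * s))‖ = Real.exp (-l.re * s) := by
    intro s
    rw [Complex.norm_exp]
    congr 1
    simp [Complex.mul_re]
  have hderiv : ∀ s ∈ Set.Ici (0:ℝ),
      HasDerivAt (fun s : ℝ => -l⁻¹ * Complex.exp (-(l * s))) (Complex.exp (-(l * s))) s := by
    intro s _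
    have h0 : HasDerivAt (fun s : ℝ => (s : ℂ)) 1 s := by
      exact Complex.ofRealCLM.hasDerivAt (x := s)
    have h1 : HasDerivAt (fun s : ℝ => -(l * (s:ℂ))) (-l) s := by
      have := (h0.const_mul l).neg; simp only [mul_one] at this; exact this
    have h2 := h1.cexp
    have h3 := h2.const_mul (-l⁻¹)
    have hl0 : l ≠ 0 := fun h => by simp [h] at hl
    exact h3.congr_deriv (by field_simp)
  have hint := cexp_integrableOn_aux hl
  have htend : Tendsto (fun s : ℝ => -l⁻¹ * Complex.exp (-(l * s))) atTop (𝓝 0) := by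
    rw [tendsto_zero_iff_norm_tendsto_zero]
    have h1 : Tendsto (fun s : ℝ => l.re * s) atTop atTop :=
      Tendsto.const_mul_atTop hl tendsto_id
    have h2 : Tendsto (fun s : ℝ => Real.exp (-(l.re * s))) atTop (𝓝 0) :=
      Real.tendsto_exp_neg_atTop_nhds_zero.comp h1
    have h3 := h2.const_mul ‖(-l⁻¹ : ℂ)‖
    have heq : (fun s : ℝ => ‖-l⁻¹ * Complex.exp (-(l * s))‖)
        = fun s : ℝ => ‖(-l⁻¹ : ℂ)‖ * Real.exp (-l.re * s) := by
      funext s; rw [norm_mul, hnorm s]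
    rw [heq]
    simpa [neg_mul] using h3
  have := MeasureTheory.integral_Ioi_of_hasDerivAt_of_tendsto' hderiv hint htend
  rw [this]
  simp

end Helpers3

section Helpers4

variable {X : Type*} [NormedAddCommGroup X] [NormedSpace ℂ X] [CompleteSpace X]
variable {T : ℝ → X →L[ℂ] X}

lemma cexp_norm_aux (l : ℂ) (s : ℝ) :
    ‖Complex.exp (-(l * s))‖ = Real.exp (-l.re * s) := by
  rw [Complex.norm_exp]
  congr 1
  simp [Complex.mul_re]

lemma Fprim_bound (hT : IsC0Semigroup T) (x : X)
    (herg : ∃ y : X, Tendsto (fun t : ℝ => cesaro T t x) atTop (𝓝 y)) :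
    ∃ M : ℝ, 0 < M ∧ ∀ s : ℝ, 0 ≤ s → ‖Fprim T x s‖ ≤ M * (1 + s) := by
  obtain ⟨y, hy⟩ := herg
  have hev : ∀ᶠ t in atTop, ‖cesaro T t x‖ ≤ ‖y‖ + 1 := by
    filter_upwards [hy (Metric.ball_mem_nhds y one_pos)] with t ht
    have : dist (cesaro T t x) y < 1 := ht
    have h2 : ‖cesaro T t x - y‖ < 1 := by rw [← dist_eq_norm]; exact this
    calc ‖cesaro T t x‖ = ‖cesaro T t x - y + y‖ := by rw [sub_add_cancel]
      _ ≤ ‖cesaro T t x - y‖ + ‖y‖ := norm_add_le _ _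
      _ ≤ ‖y‖ + 1 := by linarith
  obtain ⟨t₀, ht₀⟩ := eventually_atTop.1 hev
  set t₁ : ℝ := max t₀ 1 with ht₁def
  have ht₁ : (1:ℝ) ≤ t₁ := le_max_right _ _
  obtain ⟨C, hC⟩ := (isCompact_Icc (a := (0:ℝ)) (b := t₁)).exists_bound_of_continuousOn
    ((Fprim_continuousOn hT x).mono (fun s hs => hs.1))
  have hC0 : 0 ≤ C := le_trans (norm_nonneg _) (hC 0 ⟨le_rfl, by linarith⟩)
  refine ⟨max C (‖y‖ + 1) + 1, by positivity, fun s hs => ?_⟩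
  set M : ℝ := max C (‖y‖ + 1) + 1 with hMdef
  have hM0 : 0 < M := by positivity
  rcases le_or_gt s t₁ with hcase | hcase
  · calc ‖Fprim T x s‖ ≤ C := hC s ⟨hs, hcase⟩
      _ ≤ M := by simp only [hMdef]; nlinarith [le_max_left C (‖y‖ + 1)]
      _ ≤ M * (1 + s) := le_mul_of_one_le_right hM0.le (by linarith)
  · have hs1 : 1 ≤ s := le_trans ht₁ hcase.le
    have hs0 : s ≠ 0 := by linarith
    have hFs : Fprim T x s = s • cesaro T s x := by
      rw [cesaro, smul_smul, mul_inv_cancel₀ hs0, one_smul, Fprim]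
    have hcs : ‖cesaro T s x‖ ≤ ‖y‖ + 1 :=
      ht₀ s (le_trans (le_max_left _ _) (le_trans (le_refl t₁) hcase.le))
    calc ‖Fprim T x s‖ = |s| * ‖cesaro T s x‖ := by rw [hFs, norm_smul, Real.norm_eq_abs]
      _ ≤ s * (‖y‖ + 1) := by
          rw [abs_of_nonneg hs]
          exact mul_le_mul_of_nonneg_left hcs hs
      _ ≤ M * (1 + s) := by
          have h1 : ‖y‖ + 1 ≤ M := by
            simp only [hMdef]; nlinarith [le_max_right C (‖y‖ + 1)]
          nlinarith [norm_nonneg y]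

variable (T) in
noncomputable def Gfun (x : X) (l : ℂ) : ℝ → X :=
  fun s => Complex.exp (-(l * s)) • Fprim T x s

omit [CompleteSpace X] in
lemma Gfun_continuousOn (hT : IsC0Semigroup T) (x : X) (l : ℂ) :
    ContinuousOn (Gfun T x l) (Set.Ici 0) := by
  refine ContinuousOn.smul ?_ (Fprim_continuousOn hT x)
  exact (Complex.continuous_exp.comp (by continuity)).continuousOn

omit [CompleteSpace X] in
lemma exp_smul_norm_le {g : ℝ → X} {M : ℝ}
    (hM : ∀ s : ℝ, 0 ≤ s → ‖g s‖ ≤ M * (1 + s)) (hM0 : 0 ≤ M)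
    {l : ℂ} (hl : 0 < l.re) {s : ℝ} (hs : 0 ≤ s) :
    ‖Complex.exp (-(l * s)) • g s‖ ≤ M * max 1 (2 / l.re) * Real.exp (-(l.re / 2) * s) := by
  have hK : 1 + s ≤ max 1 (2 / l.re) * Real.exp (l.re / 2 * s) := by
    have := one_add_le_exp_aux (t := l.re / 2) (by linarith) hs
    rw [show ((l.re / 2)⁻¹ : ℝ) = 2 / l.re by field_simp] at this
    exact this
  have hexp : (0:ℝ) ≤ Real.exp (-l.re * s) := (Real.exp_pos _).le
  calc ‖Complex.exp (-(l * s)) • g s‖ = Real.exp (-l.re * s) * ‖g s‖ := by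
        rw [norm_smul, cexp_norm_aux]
    _ ≤ Real.exp (-l.re * s) * (M * (1 + s)) :=
        mul_le_mul_of_nonneg_left (hM s hs) hexp
    _ ≤ Real.exp (-l.re * s) * (M * (max 1 (2 / l.re) * Real.exp (l.re / 2 * s))) := by
        refine mul_le_mul_of_nonneg_left ?_ hexp
        exact mul_le_mul_of_nonneg_left hK hM0
    _ = M * max 1 (2 / l.re) * (Real.exp (-l.re * s) * Real.exp (l.re / 2 * s)) := by ring
    _ = M * max 1 (2 / l.re) * Real.exp (-(l.re / 2) * s) := by
        rw [← Real.exp_add]; ring_nf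

lemma exp_smul_integrableOn {g : ℝ → X} (hg : ContinuousOn g (Set.Ici 0)) {M : ℝ}
    (hM : ∀ s : ℝ, 0 ≤ s → ‖g s‖ ≤ M * (1 + s)) (hM0 : 0 ≤ M)
    {l : ℂ} (hl : 0 < l.re) :
    MeasureTheory.IntegrableOn (fun s : ℝ => Complex.exp (-(l * s)) • g s) (Set.Ioi 0) := by
  refine MeasureTheory.Integrable.mono'
    ((exp_neg_integrableOn_Ioi 0 (by linarith : (0:ℝ) < l.re / 2)).const_mul
      (M * max 1 (2 / l.re))) ?_ ?_
  · refine ContinuousOn.aestronglyMeasurable ?_ measurableSet_Ioi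
    refine ContinuousOn.mono ?_ Set.Ioi_subset_Ici_self
    exact ((Complex.continuous_exp.comp (by continuity)).continuousOn).smul hg
  · filter_upwards [MeasureTheory.ae_restrict_mem measurableSet_Ioi] with s hs
    exact exp_smul_norm_le hM hM0 hl (le_of_lt hs)

lemma Gfun_integrableOn (hT : IsC0Semigroup T) (x : X) {M : ℝ}
    (hM : ∀ s : ℝ, 0 ≤ s → ‖Fprim T x s‖ ≤ M * (1 + s)) (hM0 : 0 ≤ M)
    {l : ℂ} (hl : 0 < l.re) :
    MeasureTheory.IntegrableOn (Gfun T x l) (Set.Ioi 0) :=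
  exp_smul_integrableOn (Fprim_continuousOn hT x) hM hM0 hl

lemma Gfun_integral_norm_le (hT : IsC0Semigroup T) (x : X) {M : ℝ}
    (hM : ∀ s : ℝ, 0 ≤ s → ‖Fprim T x s‖ ≤ M * (1 + s)) (hM0 : 0 ≤ M)
    {l : ℂ} (hl : 0 < l.re) :
    ‖∫ s in Set.Ioi (0:ℝ), Gfun T x l s‖ ≤ M * max 1 (2 / l.re) * (2 / l.re) := by
  have hbound := MeasureTheory.norm_integral_le_of_norm_le
    (f := Gfun T x l) (μ := MeasureTheory.volume.restrict (Set.Ioi 0))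
    (g := fun s => M * max 1 (2 / l.re) * Real.exp (-(l.re / 2) * s))
    ((exp_neg_integrableOn_Ioi 0 (by linarith : (0:ℝ) < l.re / 2)).const_mul
      (M * max 1 (2 / l.re)))
    (by filter_upwards [MeasureTheory.ae_restrict_mem measurableSet_Ioi] with s hs
        exact exp_smul_norm_le hM hM0 hl (le_of_lt hs))
  refine le_trans hbound ?_
  rw [MeasureTheory.integral_const_mul, integral_exp_neg_mul_Ioi_aux
    (by linarith : (0:ℝ) < l.re / 2)]
  have h2 : ((l.re / 2)⁻¹ : ℝ) = 2 / l.re := by field_simp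
  rw [h2]

end Helpers4

section Helpers5

variable {X : Type*} [NormedAddCommGroup X] [NormedSpace ℂ X] [CompleteSpace X]
variable {T : ℝ → X →L[ℂ] X} {D : Set X} {A : X → X}

/-- Key translation identity for `T h` applied to the Laplace-type integral. -/
lemma T_Ifun (hT : IsC0Semigroup T) (x : X) {M : ℝ}
    (hM : ∀ s : ℝ, 0 ≤ s → ‖Fprim T x s‖ ≤ M * (1 + s)) (hM0 : 0 ≤ M)
    {l : ℂ} (hl : 0 < l.re) {h : ℝ} (hh : 0 < h) :
    T h (∫ s in Set.Ioi (0:ℝ), Gfun T x l s)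
      = Complex.exp (l * h) • (∫ s in Set.Ioi (0:ℝ), Gfun T x l s)
        - Complex.exp (l * h) • (∫ v in Set.Ioc (0:ℝ) h, Gfun T x l v)
        - l⁻¹ • Fprim T x h := by
  have hGint : MeasureTheory.IntegrableOn (Gfun T x l) (Set.Ioi 0) :=
    Gfun_integrableOn hT x hM hM0 hl
  -- move T h inside the integral
  have step1 : T h (∫ s in Set.Ioi (0:ℝ), Gfun T x l s)
      = ∫ s in Set.Ioi (0:ℝ), T h (Gfun T x l s) :=
    (ContinuousLinearMap.integral_comp_comm (T h) hGint).symm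
  -- pointwise identity
  have step2 : ∀ s ∈ Set.Ioi (0:ℝ), T h (Gfun T x l s)
      = Complex.exp (-(l * s)) • Fprim T x (s + h)
        - Complex.exp (-(l * s)) • Fprim T x h := by
    intro s hs
    rw [Gfun, _root_.map_smul, T_Fprim hT x hh.le (le_of_lt hs), smul_sub]
  -- integrability of the two pieces
  have hint1 : MeasureTheory.IntegrableOn
      (fun s : ℝ => Complex.exp (-(l * s)) • Fprim T x (s + h)) (Set.Ioi 0) := by
    refine exp_smul_integrableOn ?_ (M := M * (1 + h)) (fun s hs => ?_) (by positivity) hl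
    · exact (Fprim_continuousOn hT x).comp (Continuous.continuousOn (by continuity))
        (fun s hs => by simp only [Set.mem_Ici] at *; linarith)
    · calc ‖Fprim T x (s + h)‖ ≤ M * (1 + (s + h)) := hM _ (by linarith)
        _ ≤ M * (1 + h) * (1 + s) := by nlinarith [mul_nonneg hM0 (mul_nonneg hs hh.le)]
  have hint2 : MeasureTheory.IntegrableOn
      (fun s : ℝ => Complex.exp (-(l * s)) • Fprim T x h) (Set.Ioi 0) :=
    (cexp_integrableOn_aux hl).smul_const _
  have step3 : ∫ s in Set.Ioi (0:ℝ), T h (Gfun T x l s)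
      = (∫ s in Set.Ioi (0:ℝ), Complex.exp (-(l * s)) • Fprim T x (s + h))
        - ∫ s in Set.Ioi (0:ℝ), Complex.exp (-(l * s)) • Fprim T x h := by
    rw [← MeasureTheory.integral_sub hint1 hint2]
    exact MeasureTheory.setIntegral_congr_fun measurableSet_Ioi step2
  -- second piece evaluates via the exponential integral
  have step4 : (∫ s in Set.Ioi (0:ℝ), Complex.exp (-(l * s)) • Fprim T x h)
      = l⁻¹ • Fprim T x h := by
    rw [integral_smul_const, integral_cexp_neg_mul_Ioi_aux hl]
  -- first piece: translation
  have step5 : (∫ s in Set.Ioi (0:ℝ), Complex.exp (-(l * s)) • Fprim T x (s + h))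
      = Complex.exp (l * h) • ∫ s in Set.Ioi (0:ℝ), Gfun T x l (s + h) := by
    rw [← MeasureTheory.integral_smul]
    refine MeasureTheory.setIntegral_congr_fun measurableSet_Ioi (fun s _ => ?_)
    rw [Gfun, smul_smul, ← Complex.exp_add]
    congr 2
    push_cast
    ring
  have step6 : (∫ s in Set.Ioi (0:ℝ), Gfun T x l (s + h))
      = ∫ v in Set.Ioi h, Gfun T x l v := by
    have hpre : (fun s : ℝ => s + h) ⁻¹' Set.Ioi h = Set.Ioi 0 := by
      ext s; simp
    have := (MeasureTheory.measurePreserving_add_right MeasureTheory.volume h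
      ).setIntegral_preimage_emb (MeasurableEquiv.addRight h).measurableEmbedding
      (Gfun T x l) (Set.Ioi h)
    rw [hpre] at this
    exact this
  have step7 : (∫ v in Set.Ioi h, Gfun T x l v)
      = (∫ s in Set.Ioi (0:ℝ), Gfun T x l s) - ∫ v in Set.Ioc (0:ℝ) h, Gfun T x l v := by
    have hsplit : Set.Ioc (0:ℝ) h ∪ Set.Ioi h = Set.Ioi 0 := Set.Ioc_union_Ioi_eq_Ioi hh.le
    have hdisj : Disjoint (Set.Ioc (0:ℝ) h) (Set.Ioi h) := by
      rw [Set.disjoint_left]; intro a ha ha'; exact absurd ha.2 (not_le.2 ha')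
    have heq := MeasureTheory.setIntegral_union hdisj measurableSet_Ioi
      (hGint.mono_set Set.Ioc_subset_Ioi_self) (hGint.mono_set (Set.Ioi_subset_Ioi hh.le))
    rw [hsplit] at heq
    rw [heq]
    abel
  rw [step1, step3, step4, step5, step6, step7, smul_sub]

end Helpers5

section Helpers6

variable {X : Type*} [NormedAddCommGroup X] [NormedSpace ℂ X] [CompleteSpace X]
variable {T : ℝ → X →L[ℂ] X} {D : Set X} {A : X → X}

lemma slope_cexp (l : ℂ) :
    Tendsto (fun h : ℝ => h⁻¹ • (Complex.exp (l * h) - 1)) (𝓝[>] 0) (𝓝 l) := by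
  have h0 : HasDerivAt (fun s : ℝ => (s : ℂ)) 1 0 := by
    exact Complex.ofRealCLM.hasDerivAt (x := (0:ℝ))
  have hd : HasDerivAt (fun h : ℝ => Complex.exp (l * h)) l 0 := by
    simpa using (h0.const_mul l).cexp
  rw [hasDerivAt_iff_tendsto_slope] at hd
  have hmono : 𝓝[>] (0:ℝ) ≤ 𝓝[≠] (0:ℝ) :=
    nhdsWithin_mono 0 (fun y hy => ne_of_gt hy)
  refine (hd.mono_left hmono).congr (fun h => ?_)
  rw [slope_def_module]
  simp

lemma cexp_tendsto_one (l : ℂ) :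
    Tendsto (fun h : ℝ => Complex.exp (l * h)) (𝓝[>] 0) (𝓝 1) := by
  have : Continuous fun h : ℝ => Complex.exp (l * h) :=
    Complex.continuous_exp.comp (continuous_const.mul Complex.continuous_ofReal)
  have h2 := (this.tendsto 0).mono_left (nhdsWithin_le_nhds (s := Set.Ioi 0))
  simpa using h2

lemma Jfun_tendsto (hT : IsC0Semigroup T) (x : X) (l : ℂ) :
    Tendsto (fun h : ℝ => h⁻¹ • ∫ v in Set.Ioc (0:ℝ) h, Gfun T x l v) (𝓝[>] 0) (𝓝 0) := by
  rw [Metric.tendsto_nhdsWithin_nhds]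
  intro ε hε
  have hcont : ContinuousWithinAt (Gfun T x l) (Set.Ici 0) 0 :=
    Gfun_continuousOn hT x l 0 Set.self_mem_Ici
  rw [Metric.continuousWithinAt_iff] at hcont
  obtain ⟨δ, hδ, hδ'⟩ := hcont (ε/2) (by linarith)
  have hG0 : Gfun T x l 0 = 0 := by simp [Gfun, Fprim_zero]
  refine ⟨δ, hδ, fun {h} hh hdist => ?_⟩
  have hh' : 0 < h := hh
  rw [Real.dist_eq, sub_zero, abs_of_pos hh'] at hdist
  have hbound : ∀ v ∈ Set.Ioc (0:ℝ) h, ‖Gfun T x l v‖ ≤ ε/2 := by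
    intro v hv
    have : dist (Gfun T x l v) (Gfun T x l 0) < ε/2 := by
      refine hδ' hv.1.le ?_
      rw [Real.dist_eq, sub_zero, abs_of_nonneg hv.1.le]
      exact lt_of_le_of_lt hv.2 hdist
    rw [hG0, dist_zero_right] at this
    exact this.le
  have hnorm : ‖∫ v in Set.Ioc (0:ℝ) h, Gfun T x l v‖ ≤ ε/2 * h := by
    have := MeasureTheory.norm_setIntegral_le_of_norm_le_const
      (by rw [Real.volume_Ioc]; exact ENNReal.ofReal_lt_top) hbound
    rwa [MeasureTheory.measureReal_def, Real.volume_Ioc, ENNReal.toReal_ofReal (by linarith), sub_zero] at this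
  have : dist (h⁻¹ • ∫ v in Set.Ioc (0:ℝ) h, Gfun T x l v) 0 ≤ ε/2 := by
    rw [dist_zero_right, norm_smul, norm_inv, Real.norm_eq_abs, abs_of_pos hh']
    calc h⁻¹ * ‖∫ v in Set.Ioc (0:ℝ) h, Gfun T x l v‖ ≤ h⁻¹ * (ε/2 * h) :=
          mul_le_mul_of_nonneg_left hnorm (by positivity)
      _ = ε/2 := by field_simp
  linarith [this]

lemma Ifun_mem (hT : IsC0Semigroup T) (hA : IsGenerator T D A) (x : X) {M : ℝ}
    (hM : ∀ s : ℝ, 0 ≤ s → ‖Fprim T x s‖ ≤ M * (1 + s)) (hM0 : 0 ≤ M)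
    {l : ℂ} (hl : 0 < l.re) :
    (∫ s in Set.Ioi (0:ℝ), Gfun T x l s) ∈ D ∧
      A (∫ s in Set.Ioi (0:ℝ), Gfun T x l s)
        = l • (∫ s in Set.Ioi (0:ℝ), Gfun T x l s) - l⁻¹ • x := by
  set I := ∫ s in Set.Ioi (0:ℝ), Gfun T x l s with hIdef
  have hquot : ∀ h ∈ Set.Ioi (0:ℝ), h⁻¹ • (T h I - I)
      = (h⁻¹ • (Complex.exp (l * h) - 1)) • I
        - Complex.exp (l * h) • (h⁻¹ • ∫ v in Set.Ioc (0:ℝ) h, Gfun T x l v)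
        - l⁻¹ • (h⁻¹ • Fprim T x h) := by
    intro h hh
    rw [T_Ifun hT x hM hM0 hl hh, ← hIdef]
    have hstep : Complex.exp (l * h) • I
        - Complex.exp (l * h) • (∫ v in Set.Ioc (0:ℝ) h, Gfun T x l v)
        - l⁻¹ • Fprim T x h - I
        = (Complex.exp (l * h) - 1) • I
          - Complex.exp (l * h) • (∫ v in Set.Ioc (0:ℝ) h, Gfun T x l v)
          - l⁻¹ • Fprim T x h := by
      rw [sub_smul, one_smul]
      abel
    rw [hstep, smul_sub, smul_sub, ← smul_assoc,
      smul_comm (h⁻¹ : ℝ) (Complex.exp (l * h)), smul_comm (h⁻¹ : ℝ) (l⁻¹ : ℂ)]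
  have hQ : Tendsto (fun h : ℝ => h⁻¹ • (T h I - I)) (𝓝[>] 0)
      (𝓝 (l • I - l⁻¹ • x)) := by
    have hlim : Tendsto (fun h : ℝ =>
        (h⁻¹ • (Complex.exp (l * h) - 1)) • I
          - Complex.exp (l * h) • (h⁻¹ • ∫ v in Set.Ioc (0:ℝ) h, Gfun T x l v)
          - l⁻¹ • (h⁻¹ • Fprim T x h)) (𝓝[>] 0) (𝓝 (l • I - l⁻¹ • x)) := by
      have t1 := (slope_cexp l).smul_const I
      have t2 := (cexp_tendsto_one l).smul (Jfun_tendsto hT x l)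
      rw [smul_zero] at t2
      have t3 := (Fprim_deriv_zero hT x).const_smul (l⁻¹ : ℂ)
      have := (t1.sub t2).sub t3
      simpa using this
    refine hlim.congr' ?_
    filter_upwards [self_mem_nhdsWithin] with h hh
    exact (hquot h hh).symm
  have hmem : I ∈ D := (hA.mem_domain_iff I).2 ⟨_, hQ⟩
  exact ⟨hmem, tendsto_nhds_unique (hA.tendsto_of_mem I hmem) hQ⟩

end Helpers6

section Helpers7

variable {X : Type*} [NormedAddCommGroup X] [NormedSpace ℂ X] [CompleteSpace X]
variable {T : ℝ → X →L[ℂ] X}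

lemma Ifun_analyticOnNhd (hT : IsC0Semigroup T) (x : X) {M : ℝ}
    (hM : ∀ s : ℝ, 0 ≤ s → ‖Fprim T x s‖ ≤ M * (1 + s)) (hM0 : 0 ≤ M) :
    AnalyticOnNhd ℂ (fun z : ℂ => ∫ s in Set.Ioi (0:ℝ), Gfun T x z s)
      {z : ℂ | 0 < z.re} := by
  have hopen : IsOpen {z : ℂ | 0 < z.re} := isOpen_Ioi.preimage Complex.continuous_re
  refine DifferentiableOn.analyticOnNhd (fun l₀ hl₀ => ?_) hopen
  set σ := l₀.re with hσdef
  have hσ : 0 < σ := hl₀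
  set K : ℝ := max 1 (σ/8)⁻¹ with hKdef
  have hK1 : (1:ℝ) ≤ K := le_max_left _ _
  have key := hasDerivAt_integral_of_dominated_loc_of_deriv_le
    (F := fun (z : ℂ) (s : ℝ) => Complex.exp (-(z * s)) • Fprim T x s)
    (F' := fun (z : ℂ) (s : ℝ) => (-(s:ℂ) * Complex.exp (-(z * s))) • Fprim T x s)
    (x₀ := l₀) (s := ball l₀ (σ/2))
    (μ := MeasureTheory.volume.restrict (Set.Ioi 0))
    (bound := fun s : ℝ => M * K^2 * Real.exp (-(σ/4) * s))
    (ball_mem_nhds l₀ (by linarith))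
    ?_ ?_ ?_ ?_ ?_ ?_
  · exact (key.2.differentiableAt).differentiableWithinAt
  · -- measurability of F z
    refine Filter.Eventually.of_forall (fun z => ?_)
    refine ContinuousOn.aestronglyMeasurable ?_ measurableSet_Ioi
    refine ContinuousOn.mono ?_ Set.Ioi_subset_Ici_self
    exact ((Complex.continuous_exp.comp (by continuity)).continuousOn).smul
      (Fprim_continuousOn hT x)
  · exact Gfun_integrableOn hT x hM hM0 hσ
  · -- measurability of F' l₀
    refine ContinuousOn.aestronglyMeasurable ?_ measurableSet_Ioi
    refine ContinuousOn.mono ?_ Set.Ioi_subset_Ici_self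
    refine ContinuousOn.smul ?_ (Fprim_continuousOn hT x)
    exact (Continuous.mul (by continuity) (Complex.continuous_exp.comp
      (by continuity))).continuousOn
  · -- bound
    filter_upwards [MeasureTheory.ae_restrict_mem measurableSet_Ioi] with s hs
    intro z hz
    have hs0 : (0:ℝ) ≤ s := le_of_lt hs
    have hzre : σ/2 ≤ z.re := by
      have h1 : |z.re - σ| ≤ ‖z - l₀‖ := by
        simpa using Complex.abs_re_le_norm (z - l₀)
      have h2 : ‖z - l₀‖ < σ/2 := mem_ball_iff_norm.1 hz
      have := abs_le.1 (le_of_lt (lt_of_le_of_lt h1 h2))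
      linarith [this.1]
    have hnorm : ‖(-(s:ℂ) * Complex.exp (-(z * s))) • Fprim T x s‖
        = s * Real.exp (-z.re * s) * ‖Fprim T x s‖ := by
      rw [norm_smul, norm_mul, cexp_norm_aux]
      simp [abs_of_nonneg hs0]
    rw [hnorm]
    have hexp_le : Real.exp (-z.re * s) ≤ Real.exp (-(σ/2) * s) := by
      apply Real.exp_le_exp.2
      nlinarith
    have h1s : 1 + s ≤ K * Real.exp (σ/8 * s) := by
      have := one_add_le_exp_aux (t := σ/8) (by linarith) hs0
      exact this
    have hss : s * (1 + s) ≤ K^2 * Real.exp (σ/4 * s) := by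
      have h2 : s * (1+s) ≤ (1+s)^2 := by nlinarith
      have h3 : (1+s)^2 ≤ (K * Real.exp (σ/8 * s))^2 := by
        have h4 : (0:ℝ) ≤ 1 + s := by linarith
        exact pow_le_pow_left₀ h4 h1s 2
      have h5 : (K * Real.exp (σ/8 * s))^2 = K^2 * Real.exp (σ/4 * s) := by
        rw [mul_pow, pow_two (Real.exp _), ← Real.exp_add]
        ring_nf
      linarith
    calc s * Real.exp (-z.re * s) * ‖Fprim T x s‖
        ≤ s * Real.exp (-(σ/2) * s) * (M * (1 + s)) := by
          have hF := hM s hs0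
          have e1 : (0:ℝ) ≤ s * Real.exp (-z.re * s) := by positivity
          have e2 : s * Real.exp (-z.re * s) ≤ s * Real.exp (-(σ/2) * s) :=
            mul_le_mul_of_nonneg_left hexp_le hs0
          have e3 : (0:ℝ) ≤ ‖Fprim T x s‖ := norm_nonneg _
          nlinarith [mul_nonneg hs0 (Real.exp_pos (-(σ/2)*s)).le]
      _ = M * (s * (1 + s)) * Real.exp (-(σ/2) * s) := by ring
      _ ≤ M * (K^2 * Real.exp (σ/4 * s)) * Real.exp (-(σ/2) * s) := by
          have := mul_le_mul_of_nonneg_left hss hM0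
          exact mul_le_mul_of_nonneg_right this (Real.exp_pos _).le
      _ = M * K^2 * (Real.exp (σ/4 * s) * Real.exp (-(σ/2) * s)) := by ring
      _ = M * K^2 * Real.exp (-(σ/4) * s) := by
          rw [← Real.exp_add]
          ring_nf
  · -- bound integrable
    exact (exp_neg_integrableOn_Ioi 0 (by linarith : (0:ℝ) < σ/4)).const_mul (M * K^2)
  · -- differentiability
    refine Filter.Eventually.of_forall (fun s => ?_)
    intro z hz
    have h1 : HasDerivAt (fun z : ℂ => -(z * (s:ℂ))) (-(s:ℂ)) z := by
      have := ((hasDerivAt_id z).mul_const (s:ℂ)).neg; simp only [one_mul] at this; exact this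
    have h2 := h1.cexp
    have h3 := h2.smul_const (Fprim T x s)
    convert h3 using 1
    rw [mul_comm]
end Helpers7


/-- If `A` has the SVEP, `T(t)` is local mean ergodic at `x`, and `0` is a pole of order
`n ≥ 1` of the local resolvent function of `A` at `x`, then `n ≤ 1`. -/
theorem pole_order_le_one_of_localMeanErgodic
    {X : Type*} [NormedAddCommGroup X] [NormedSpace ℂ X] [CompleteSpace X]
    (T : ℝ → X →L[ℂ] X) (D : Set X) (A : X → X)
    (hT : IsC0Semigroup T) (hA : IsGenerator T D A)
    (hSVEP : ∀ μ : ℂ, HasSVEPAt D A μ) (x : X)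
    (herg : ∃ y : X, Tendsto (fun t : ℝ => cesaro T t x) atTop (𝓝 y))
    (n : ℕ) (hn : 1 ≤ n) (hpole : IsLocalPoleOfOrder D A x 0 n) :
    n ≤ 1 := by
  by_contra hcon
  push_neg at hcon
  have hn2 : 2 ≤ n := hcon
  obtain ⟨-, r, hr, -, f, hf, hf0, hpoleq⟩ := hpole
  obtain ⟨M, hMpos, hM⟩ := Fprim_bound hT x herg
  set I : ℂ → X := fun z => ∫ s in Set.Ioi (0:ℝ), Gfun T x z s with hIdef
  have key : ∀ lam : ℝ, 0 < lam → lam < r/2 → lam ≤ 1 → ‖f lam‖ ≤ 4 * M * lam := by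
    intro lam hlam hlamr hlam1
    set lc : ℂ := (lam : ℂ) with hlcdef
    have hlcre : 0 < lc.re := by simpa [hlcdef] using hlam
    have hlc0 : lc ≠ 0 := by
      simp only [hlcdef, ne_eq, Complex.ofReal_eq_zero]
      exact hlam.ne'
    have hball : ∀ z ∈ ball lc (lam/2), 0 < z.re ∧ z ≠ 0 ∧ z ∈ ball (0:ℂ) r := by
      intro z hz
      have hdist : ‖z - lc‖ < lam/2 := mem_ball_iff_norm.1 hz
      have hre : |(z - lc).re| ≤ ‖z - lc‖ := Complex.abs_re_le_norm _
      have hre' : |z.re - lam| < lam/2 := by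
        have h1 : (z - lc).re = z.re - lam := by simp [hlcdef]
        rw [h1] at hre
        exact lt_of_le_of_lt hre hdist
      have h1 : 0 < z.re := by
        have := abs_lt.1 hre'
        linarith [this.1]
      refine ⟨h1, ?_, ?_⟩
      · intro h0
        rw [h0] at h1
        simp at h1
      · rw [mem_ball_iff_norm, sub_zero]
        calc ‖z‖ = ‖z - lc + lc‖ := by rw [sub_add_cancel]
          _ ≤ ‖z - lc‖ + ‖lc‖ := norm_add_le _ _
          _ < lam/2 + lam := by
              have h2 : ‖lc‖ = lam := by
                simp [hlcdef, abs_of_pos hlam]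
              rw [h2]; linarith
          _ < r := by linarith
    set hfun : ℂ → X := fun z => (z - 0)⁻¹ ^ n • f z - z • I z with hfundef
    have hanal : AnalyticOnNhd ℂ hfun (ball lc (lam/2)) := by
      intro z hz
      obtain ⟨hz1, hz2, hz3⟩ := hball z hz
      have ha1 : AnalyticAt ℂ (fun z : ℂ => (z - 0)⁻¹ ^ n) z := by
        have h1 : AnalyticAt ℂ (fun z : ℂ => z - 0) z := analyticAt_id.sub analyticAt_const
        exact (h1.inv (by simpa using hz2)).pow n
      have ha2 : AnalyticAt ℂ f z := hf z hz3
      have ha3 : AnalyticAt ℂ I z := by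
        rw [hIdef]
        exact Ifun_analyticOnNhd hT x hM hMpos.le z hz1
      exact (ha1.smul ha2).sub (analyticAt_id.smul ha3)
    have hcond : ∀ z ∈ ball lc (lam/2), hfun z ∈ D ∧ z • hfun z - A (hfun z) = 0 := by
      intro z hz
      obtain ⟨hz1, hz2, hz3⟩ := hball z hz
      obtain ⟨huD, huEq⟩ := hpoleq z hz3 hz2
      obtain ⟨hID, hIEq⟩ := Ifun_mem hT hA x hM hMpos.le hz1
      obtain ⟨hgD, hgEq⟩ := gen_smul hA hID z
      have hAu : A ((z - 0)⁻¹ ^ n • f z) = z • ((z - 0)⁻¹ ^ n • f z) - x :=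
        eq_sub_of_add_eq (by rw [← huEq]; abel)
      have hAg : A (z • ∫ s in Set.Ioi (0:ℝ), Gfun T x z s)
          = z • (z • ∫ s in Set.Ioi (0:ℝ), Gfun T x z s) - x := by
        rw [hgEq, hIEq, smul_sub]
        congr 1
        rw [smul_smul, mul_inv_cancel₀ hz2, one_smul]
      obtain ⟨hsD', hsEq⟩ := gen_sub hA huD hgD
      constructor
      · simpa only [hfundef, hIdef] using hsD'
      · simp only [hfundef, hIdef]
        rw [hsEq, hAu, hAg, smul_sub]
        abel
    have hzero := hSVEP lc (lam/2) (by linarith) hfun hanal hcond lc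
      (mem_ball_self (by linarith))
    have hu : (lc - 0)⁻¹ ^ n • f lc = lc • I lc := by
      have h1 : hfun lc = 0 := hzero
      simp only [hfundef] at h1
      exact sub_eq_zero.1 h1
    have hflc : f lc = lc ^ n • (lc • I lc) := by
      rw [← hu, smul_smul, sub_zero, ← mul_pow, mul_inv_cancel₀ hlc0, one_pow, one_smul]
    have hInorm : ‖I lc‖ ≤ M * (2/lam) * (2/lam) := by
      simp only [hIdef]
      have h1 := Gfun_integral_norm_le hT x hM hMpos.le hlcre
      have h2 : lc.re = lam := by simp [hlcdef]
      rw [h2] at h1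
      have h3 : max 1 (2/lam) = 2/lam := by
        apply max_eq_right
        rw [le_div_iff₀ hlam]
        linarith
      rw [h3] at h1
      exact h1
    have hpow : lam ^ n ≤ lam ^ 2 := pow_le_pow_of_le_one hlam.le hlam1 hn2
    have hnormf : ‖f lc‖ = lam ^ n * (lam * ‖I lc‖) := by
      rw [hflc, norm_smul, norm_smul, norm_pow]
      have h2 : ‖lc‖ = lam := by
        simp [hlcdef, abs_of_pos hlam]
      rw [h2]
    calc ‖f lc‖ = lam ^ n * (lam * ‖I lc‖) := hnormf
      _ ≤ lam ^ n * (lam * (M * (2/lam) * (2/lam))) := by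
          refine mul_le_mul_of_nonneg_left ?_ (by positivity)
          exact mul_le_mul_of_nonneg_left hInorm hlam.le
      _ = lam ^ n * (4 * M / lam) := by field_simp; ring
      _ ≤ lam ^ 2 * (4 * M / lam) := by
          refine mul_le_mul_of_nonneg_right hpow (by positivity)
      _ = 4 * M * lam := by field_simp
  -- limit as lam → 0⁺ forces f 0 = 0, contradiction
  have hcont : Tendsto (fun lam : ℝ => ‖f (lam : ℂ)‖) (𝓝[>] 0) (𝓝 ‖f 0‖) := by
    have h1 : ContinuousAt f 0 := (hf 0 (mem_ball_self hr)).continuousAt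
    have h2 : Tendsto (fun lam : ℝ => (lam : ℂ)) (𝓝[>] 0) (𝓝 0) := by
      have := (Complex.continuous_ofReal.tendsto 0).mono_left
        (nhdsWithin_le_nhds (s := Set.Ioi 0))
      simpa using this
    exact (continuous_norm.tendsto _).comp (h1.tendsto.comp h2)
  have hlin : Tendsto (fun lam : ℝ => 4 * M * lam) (𝓝[>] 0) (𝓝 0) := by
    have hc : Continuous (fun lam : ℝ => 4 * M * lam) := by continuity
    have := (hc.tendsto (0:ℝ)).mono_left (nhdsWithin_le_nhds (s := Set.Ioi 0))
    simpa using this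
  have hev : ∀ᶠ lam : ℝ in 𝓝[>] 0, ‖f ((lam : ℝ) : ℂ)‖ ≤ 4 * M * lam := by
    have hmem : Set.Ioo (0:ℝ) (min (r/2) 1) ∈ 𝓝[>] (0:ℝ) :=
      Ioo_mem_nhdsGT_of_mem ⟨le_rfl, by positivity⟩
    filter_upwards [hmem] with lam hlam
    exact key lam hlam.1 (lt_of_lt_of_le hlam.2 (min_le_left _ _))
      (le_of_lt (lt_of_lt_of_le hlam.2 (min_le_right _ _)))
  have hle : ‖f 0‖ ≤ 0 := le_of_tendsto_of_tendsto hcont hlin hev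
  exact hf0 (norm_le_zero_iff.1 hle)
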